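/- Let n and N be natural numbers, R ≥ 0 and ε ≥ 0 real numbers, and let s, s' : ℕ → ℝⁿ be two sequences such that ‖s(i+1) − s(i)‖ ≤ R and ‖s'(i+1) − s'(i)‖ ≤ R for all i < N, with ‖s(0) − s'(0)‖ ≤ ε and ‖s(N) − s'(N)‖ ≤ ε. Then for every i ≤ N, ‖s(i) − s'(i)‖ ≤ 2·min(i, N − i)·R + ε. -/

import Mathlib

lemma traj_one_sided
    (n N : ℕ) (R ε : ℝ)
    (s s' : ℕ → EuclideanSpace ℝ (Fin n))
    (hs : ∀ i < N, ‖s (i + 1) - s i‖ ≤ R)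
    (hs' : ∀ i < N, ‖s' (i + 1) - s' i‖ ≤ R)
    (h0 : ‖s 0 - s' 0‖ ≤ ε) :
    ∀ i ≤ N, ‖s i - s' i‖ ≤ 2 * (i : ℝ) * R + ε := by
  intro i
  induction i with
  | zero => intro _; simpa using h0
  | succ k ih =>
    intro hk
    have hkN : k < N := Nat.lt_of_succ_le hk
    have ihk := ih (le_of_lt hkN)
    have h1 := hs k hkN
    have h2 := hs' k hkN
    have : ‖s (k+1) - s' (k+1)‖ ≤ ‖s (k+1) - s k‖ + ‖s k - s' k‖ + ‖s' k - s' (k+1)‖ := by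
      have := norm_sub_le_norm_sub_add_norm_sub (s (k+1)) (s k) (s' (k+1))
      have h3 := norm_sub_le_norm_sub_add_norm_sub (s k) (s' k) (s' (k+1))
      linarith
    have h2' : ‖s' k - s' (k+1)‖ ≤ R := by rwa [norm_sub_rev]
    have : ‖s (k+1) - s' (k+1)‖ ≤ R + (2 * (k : ℝ) * R + ε) + R := by linarith
    push_cast
    linarith

theorem trajectory_two_sided_deviation
    (n N : ℕ) (R ε : ℝ) (hR : 0 ≤ R) (hε : 0 ≤ ε)
    (s s' : ℕ → EuclideanSpace ℝ (Fin n))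
    (hs : ∀ i < N, ‖s (i + 1) - s i‖ ≤ R)
    (hs' : ∀ i < N, ‖s' (i + 1) - s' i‖ ≤ R)
    (h0 : ‖s 0 - s' 0‖ ≤ ε)
    (hN : ‖s N - s' N‖ ≤ ε) :
    ∀ i ≤ N, ‖s i - s' i‖ ≤ 2 * ((min i (N - i) : ℕ) : ℝ) * R + ε := by
  intro i hi
  have fwd := traj_one_sided n N R ε s s' hs hs' h0 i hi
  -- backward
  have bwd : ‖s i - s' i‖ ≤ 2 * ((N - i : ℕ) : ℝ) * R + ε := by
    have hrev := traj_one_sided n N R ε (fun j => s (N - j)) (fun j => s' (N - j))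
      (fun j hj => by
        have : N - (j + 1) + 1 = N - j := by omega
        rw [norm_sub_rev, ← this]
        exact hs (N - (j+1)) (by omega))
      (fun j hj => by
        have : N - (j + 1) + 1 = N - j := by omega
        rw [norm_sub_rev, ← this]
        exact hs' (N - (j+1)) (by omega))
      (by simpa using hN)
      (N - i) (by omega)
    simpa [Nat.sub_sub_self hi] using hrev
  rcases le_total i (N - i) with h | h
  · rw [min_eq_left h]; exact fwd
  · rw [min_eq_right h]; exact bwd
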